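/- Let (Ω, 𝒫) be a probability space and let Y, Z, G : Ω → {0,1} be measurable random variables such that G and Z are conditionally independent given Y, and assume 𝒫(Y=0), 𝒫(Y=1), 𝒫(Z=0), 𝒫(Z=1) > 0. If the classifier's true positive rate equals its true negative rate, i.e., 𝒫(G=1 | Y=1) = 𝒫(G=0 | Y=0), then the accuracies on the two subpopulations are equal: 𝒫(Y=G | Z=1) = 𝒫(Y=G | Z=0). -/

import Mathlib

open MeasureTheory

/-- Conditional probability `𝒫(A | B)` as a real number. -/
noncomputable def condProb {Ω : Type*} [MeasurableSpace Ω] (μ : Measure Ω)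
    (A B : Set Ω) : ℝ :=
  (μ (A ∩ B)).toReal / (μ B).toReal

/-- **Equal TPR and TNR implies no accuracy gap.** If the prediction `G` and
the subpopulation indicator `Z` are conditionally independent given the label
`Y`, and the true positive rate equals the true negative rate,
`𝒫(G=1 | Y=1) = 𝒫(G=0 | Y=0)`, then the accuracies on the two subpopulations
are equal: `𝒫(Y=G | Z=1) = 𝒫(Y=G | Z=0)`. -/
theorem equal_tpr_tnr_no_gap {Ω : Type*} [MeasurableSpace Ω]
    (μ : Measure Ω) [IsProbabilityMeasure μ] (Y Z G : Ω → Bool)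
    (hY : Measurable Y) (hZ : Measurable Z) (hG : Measurable G)
    (hCI : ∀ g z y : Bool,
      condProb μ ({ω | G ω = g} ∩ {ω | Z ω = z}) {ω | Y ω = y} =
        condProb μ {ω | G ω = g} {ω | Y ω = y} *
          condProb μ {ω | Z ω = z} {ω | Y ω = y})
    (hY1 : 0 < μ {ω | Y ω = true}) (hY0 : 0 < μ {ω | Y ω = false})
    (hZ1 : 0 < μ {ω | Z ω = true}) (hZ0 : 0 < μ {ω | Z ω = false})
    (hrate : condProb μ {ω | G ω = true} {ω | Y ω = true} =
      condProb μ {ω | G ω = false} {ω | Y ω = false}) :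
    condProb μ {ω | Y ω = G ω} {ω | Z ω = true} =
      condProb μ {ω | Y ω = G ω} {ω | Z ω = false} := by
  set t := condProb μ {ω | G ω = true} {ω | Y ω = true} with ht
  have mY : ∀ y : Bool, MeasurableSet {ω | Y ω = y} :=
    fun y => hY (measurableSet_singleton y)
  have mZ : ∀ w : Bool, MeasurableSet {ω | Z ω = w} :=
    fun w => hZ (measurableSet_singleton w)
  have mG : ∀ g : Bool, MeasurableSet {ω | G ω = g} :=
    fun g => hG (measurableSet_singleton g)
  have key : ∀ z : Bool, 0 < μ {ω | Z ω = z} →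
      condProb μ {ω | Y ω = G ω} {ω | Z ω = z} = t := by
    intro z hz
    have fac : ∀ g y : Bool,
        (μ ({ω | G ω = g} ∩ {ω | Z ω = z} ∩ {ω | Y ω = y})).toReal =
          condProb μ {ω | G ω = g} {ω | Y ω = y} *
            (μ ({ω | Z ω = z} ∩ {ω | Y ω = y})).toReal := by
      intro g y
      have h := hCI g z y
      have hcy : (0:ℝ) < (μ {ω | Y ω = y}).toReal := by
        cases y
        · exact ENNReal.toReal_pos hY0.ne' (measure_ne_top μ _)
        · exact ENNReal.toReal_pos hY1.ne' (measure_ne_top μ _)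
      unfold condProb at h ⊢
      field_simp at h ⊢
      apply mul_right_cancel₀ hcy.ne'
      ring_nf at h ⊢
      linear_combination (μ {ω | Y ω = y}).toReal * h
    -- decomposition of the accuracy set
    have hsplit : {ω | Y ω = G ω} ∩ {ω | Z ω = z} =
        ({ω | G ω = true} ∩ {ω | Z ω = z} ∩ {ω | Y ω = true}) ∪
          ({ω | G ω = false} ∩ {ω | Z ω = z} ∩ {ω | Y ω = false}) := by
      ext ω
      simp only [Set.mem_inter_iff, Set.mem_union, Set.mem_setOf_eq]
      cases hy : Y ω <;> cases hg : G ω <;> simp [hy, hg]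
    have hdisj : Disjoint
        ({ω | G ω = true} ∩ {ω | Z ω = z} ∩ {ω | Y ω = true})
        ({ω | G ω = false} ∩ {ω | Z ω = z} ∩ {ω | Y ω = false}) := by
      apply Set.disjoint_left.mpr
      rintro ω ⟨_, h1⟩ ⟨_, h0⟩
      simp only [Set.mem_setOf_eq] at h1 h0
      rw [h1] at h0; exact Bool.noConfusion h0
    have hmeas : MeasurableSet
        ({ω | G ω = false} ∩ {ω | Z ω = z} ∩ {ω | Y ω = false}) :=
      ((mG false).inter (mZ z)).inter (mY false)
    have hnum : (μ ({ω | Y ω = G ω} ∩ {ω | Z ω = z})).toReal =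
        (μ ({ω | G ω = true} ∩ {ω | Z ω = z} ∩ {ω | Y ω = true})).toReal +
          (μ ({ω | G ω = false} ∩ {ω | Z ω = z} ∩ {ω | Y ω = false})).toReal := by
      rw [hsplit, measure_union hdisj hmeas,
        ENNReal.toReal_add (measure_ne_top μ _) (measure_ne_top μ _)]
    -- decomposition of {Z = z}
    have hZsplit : {ω | Z ω = z} =
        ({ω | Z ω = z} ∩ {ω | Y ω = true}) ∪
          ({ω | Z ω = z} ∩ {ω | Y ω = false}) := by
      ext ω
      simp only [Set.mem_inter_iff, Set.mem_union, Set.mem_setOf_eq]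
      cases hy : Y ω <;> simp [hy]
    have hZdisj : Disjoint ({ω | Z ω = z} ∩ {ω | Y ω = true})
        ({ω | Z ω = z} ∩ {ω | Y ω = false}) := by
      apply Set.disjoint_left.mpr
      rintro ω ⟨_, h1⟩ ⟨_, h0⟩
      simp only [Set.mem_setOf_eq] at h1 h0
      rw [h1] at h0; exact Bool.noConfusion h0
    have hZsum : (μ {ω | Z ω = z}).toReal =
        (μ ({ω | Z ω = z} ∩ {ω | Y ω = true})).toReal +
          (μ ({ω | Z ω = z} ∩ {ω | Y ω = false})).toReal := by
      conv_lhs => rw [hZsplit]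
      rw [measure_union hZdisj ((mZ z).inter (mY false)),
        ENNReal.toReal_add (measure_ne_top μ _) (measure_ne_top μ _)]
    have hzpos : (0:ℝ) < (μ {ω | Z ω = z}).toReal :=
      ENNReal.toReal_pos hz.ne' (measure_ne_top μ _)
    unfold condProb
    rw [hnum, fac true true, fac false false, ← hrate, ← ht, ← mul_add, ← hZsum]
    field_simp
  rw [key true hZ1, key false hZ0]
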